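/- The number of 132-avoiding permutations of length n equals the Catalan number binomial(2n,n)/(n+1). -/

import Mathlib

/-- `f` picks out an occurrence of the pattern `q` in the permutation `p`. -/
def IsOcc {n k : ℕ} (q : Fin k → ℕ) (p : Equiv.Perm (Fin n)) (f : Fin k → Fin n) : Prop :=
  StrictMono f ∧ ∀ a b : Fin k, q a < q b ↔ (p (f a) : ℕ) < (p (f b) : ℕ)

def ContainsPat {n k : ℕ} (q : Fin k → ℕ) (p : Equiv.Perm (Fin n)) : Prop :=
  ∃ f, IsOcc q p f

/-- `p` avoids the pattern 132. -/
def Avoids132 {n : ℕ} (p : Equiv.Perm (Fin n)) : Prop :=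
  ¬ ContainsPat (![1, 3, 2] : Fin 3 → ℕ) p

/-- The number of occurrences of the pattern `q` in the permutation `p`. -/
noncomputable def occCnt {n k : ℕ} (q : Fin k → ℕ) (p : Equiv.Perm (Fin n)) : ℕ :=
  Nat.card {f : Fin k → Fin n // IsOcc q p f}

open scoped Classical in
/-- The total number of occurrences of the pattern `q` in all
132-avoiding permutations of length `n`. -/
noncomputable def S132 (n : ℕ) {k : ℕ} (q : Fin k → ℕ) : ℕ :=
  ∑ p ∈ Finset.univ.filter (fun p : Equiv.Perm (Fin n) => Avoids132 p), occCnt q p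

def Av2 {n : ℕ} (p : Equiv.Perm (Fin n)) : Prop :=
  ∀ i j k : Fin n, i < j → j < k → (p i : ℕ) < p k → (p k : ℕ) < p j → False

lemma avoids_iff {n : ℕ} (p : Equiv.Perm (Fin n)) : Avoids132 p ↔ Av2 p := by
  constructor
  · intro h i j k hij hjk h1 h2
    refine h ⟨![i, j, k], ?_, ?_⟩
    · intro a b hab
      match a, b with
      | 0, 0 | 1, 1 | 2, 2 | 1, 0 | 2, 0 | 2, 1 => exact absurd hab (by decide)
      | 0, 1 => exact hij
      | 0, 2 => exact lt_trans hij hjk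
      | 1, 2 => exact hjk
    · intro a b
      match a, b with
      | 0, 0 | 1, 1 | 2, 2 | 1, 0 | 2, 0 | 2, 1 | 0, 1 | 0, 2 | 1, 2 =>
        show (_ < _ ↔ _ < _); simp [Matrix.cons_val_two] <;> omega
  · rintro h ⟨f, hmono, hval⟩
    have h01 : f 0 < f 1 := hmono (by decide)
    have h12 : f 1 < f 2 := hmono (by decide)
    have hv1 : (p (f 0) : ℕ) < p (f 2) := (hval 0 2).mp (by decide)
    have hv2 : (p (f 2) : ℕ) < p (f 1) := (hval 2 1).mp (by decide)
    exact h _ _ _ h01 h12 hv1 hv2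

open Equiv

def gF {a b : ℕ} (p : Equiv.Perm (Fin a)) (q : Equiv.Perm (Fin b)) :
    Fin (a+b+1) → Fin (a+b+1) := fun i =>
  if h : (i : ℕ) < a then ⟨b + p ⟨i, h⟩, by have := (p ⟨i, h⟩).isLt; omega⟩
  else if h2 : (i : ℕ) = a then ⟨a + b, by omega⟩
  else ⟨q ⟨(i : ℕ) - (a + 1), by have := i.isLt; omega⟩, by
    have := (q ⟨(i : ℕ) - (a + 1), by have := i.isLt; omega⟩).isLt; omega⟩

def gI {a b : ℕ} (p : Equiv.Perm (Fin a)) (q : Equiv.Perm (Fin b)) :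
    Fin (a+b+1) → Fin (a+b+1) := fun v =>
  if h : (v : ℕ) < b then ⟨a + 1 + q.symm ⟨v, h⟩, by have := (q.symm ⟨v, h⟩).isLt; omega⟩
  else if h2 : (v : ℕ) < a + b then
    ⟨p.symm ⟨(v : ℕ) - b, by omega⟩, by have := (p.symm ⟨(v : ℕ) - b, by omega⟩).isLt; omega⟩
  else ⟨a, by omega⟩

variable {a b : ℕ} (p : Equiv.Perm (Fin a)) (q : Equiv.Perm (Fin b))

lemma gF_lt {i : Fin (a+b+1)} (h : (i : ℕ) < a) : (gF p q i : ℕ) = b + p ⟨i, h⟩ := by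
  rw [gF, dif_pos h]

lemma gF_eq {i : Fin (a+b+1)} (h1 : ¬ (i : ℕ) < a) (h2 : (i : ℕ) = a) :
    (gF p q i : ℕ) = a + b := by rw [gF, dif_neg h1, dif_pos h2]

lemma gF_gt {i : Fin (a+b+1)} (h1 : ¬ (i : ℕ) < a) (h2 : ¬ (i : ℕ) = a) :
    (gF p q i : ℕ) = q ⟨(i : ℕ) - (a + 1), by have := i.isLt; omega⟩ := by
  rw [gF, dif_neg h1, dif_neg h2]

lemma gI_lt {v : Fin (a+b+1)} (h : (v : ℕ) < b) :
    (gI p q v : ℕ) = a + 1 + q.symm ⟨v, h⟩ := by rw [gI, dif_pos h]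

lemma gI_mid {v : Fin (a+b+1)} (h1 : ¬ (v : ℕ) < b) (h2 : (v : ℕ) < a + b) :
    (gI p q v : ℕ) = p.symm ⟨(v : ℕ) - b, by omega⟩ := by rw [gI, dif_neg h1, dif_pos h2]

lemma gI_hi {v : Fin (a+b+1)} (h1 : ¬ (v : ℕ) < b) (h2 : ¬ (v : ℕ) < a + b) :
    (gI p q v : ℕ) = a := by rw [gI, dif_neg h1, dif_neg h2]

def glue : Equiv.Perm (Fin (a+b+1)) where
  toFun := gF p q
  invFun := gI p q
  left_inv := by
    intro i
    apply Fin.ext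
    by_cases h : (i : ℕ) < a
    · have hv := gF_lt p q h
      have hlt := (p ⟨i, h⟩).isLt
      rw [gI_mid p q (by omega) (by omega)]
      simp only [hv, Nat.add_sub_cancel_left, Fin.eta, Equiv.symm_apply_apply]
    · by_cases h2 : (i : ℕ) = a
      · have hv := gF_eq p q h h2
        rw [gI_hi p q (by omega) (by omega), h2]
      · have hv := gF_gt p q h h2
        have hlt := (q ⟨(i : ℕ) - (a + 1), by have := i.isLt; omega⟩).isLt
        rw [gI_lt p q (by omega)]
        simp only [hv, Fin.eta, Equiv.symm_apply_apply]
        have := i.isLt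
        omega
  right_inv := by
    intro v
    apply Fin.ext
    by_cases h : (v : ℕ) < b
    · have hv := gI_lt p q h
      have hlt := (q.symm ⟨v, h⟩).isLt
      rw [gF_gt p q (by omega) (by omega)]
      simp only [hv, Nat.add_sub_cancel_left, Fin.eta, Equiv.apply_symm_apply]
    · by_cases h2 : (v : ℕ) < a + b
      · have hv := gI_mid p q h h2
        have hlt := (p.symm ⟨(v : ℕ) - b, by omega⟩).isLt
        rw [gF_lt p q (by omega)]
        simp only [hv, Fin.eta, Equiv.apply_symm_apply]
        omega
      · have hv := gI_hi p q h h2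
        rw [gF_eq p q (by omega) (by omega)]
        have := v.isLt
        omega

lemma glue_lt {i : Fin (a+b+1)} (h : (i : ℕ) < a) : (glue p q i : ℕ) = b + p ⟨i, h⟩ :=
  gF_lt p q h

lemma glue_eq {i : Fin (a+b+1)} (h : (i : ℕ) = a) : (glue p q i : ℕ) = a + b :=
  gF_eq p q (by omega) h

lemma glue_gt {i : Fin (a+b+1)} (h : a < (i : ℕ)) :
    (glue p q i : ℕ) = q ⟨(i : ℕ) - (a + 1), by have := i.isLt; omega⟩ :=
  gF_gt p q (by omega) (by omega)

lemma glue_av (hp : Av2 p) (hq : Av2 q) : Av2 (glue p q) := by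
  intro i j k hij hjk h1 h2
  have hij' : (i : ℕ) < j := hij
  have hjk' : (j : ℕ) < k := hjk
  rcases lt_trichotomy (j : ℕ) a with hj | hj | hj
  · have hi : (i : ℕ) < a := by omega
    rcases lt_trichotomy (k : ℕ) a with hk | hk | hk
    · rw [glue_lt p q hi] at h1
      rw [glue_lt p q hk] at h1 h2
      rw [glue_lt p q hj] at h2
      exact hp ⟨i, hi⟩ ⟨j, hj⟩ ⟨k, hk⟩ (Fin.mk_lt_mk.mpr hij') (Fin.mk_lt_mk.mpr hjk')
        (by omega) (by omega)
    · rw [glue_eq p q hk] at h2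
      rw [glue_lt p q hj] at h2
      have := (p ⟨j, hj⟩).isLt
      omega
    · rw [glue_lt p q hi] at h1
      rw [glue_gt p q hk] at h1
      have := (q ⟨(k : ℕ) - (a + 1), by have := k.isLt; omega⟩).isLt
      omega
  · have hi : (i : ℕ) < a := by omega
    have hk : a < (k : ℕ) := by omega
    rw [glue_lt p q hi] at h1
    rw [glue_gt p q hk] at h1
    have := (q ⟨(k : ℕ) - (a + 1), by have := k.isLt; omega⟩).isLt
    omega
  · have hk : a < (k : ℕ) := by omega
    rcases lt_trichotomy (i : ℕ) a with hi | hi | hi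
    · rw [glue_lt p q hi] at h1
      rw [glue_gt p q hk] at h1
      have := (q ⟨(k : ℕ) - (a + 1), by have := k.isLt; omega⟩).isLt
      omega
    · rw [glue_eq p q hi] at h1
      rw [glue_gt p q hk] at h1
      have := (q ⟨(k : ℕ) - (a + 1), by have := k.isLt; omega⟩).isLt
      omega
    · rw [glue_gt p q hi] at h1
      rw [glue_gt p q hk] at h1 h2
      rw [glue_gt p q hj] at h2
      exact hq ⟨(i : ℕ) - (a+1), by have := i.isLt; omega⟩
        ⟨(j : ℕ) - (a+1), by have := j.isLt; omega⟩
        ⟨(k : ℕ) - (a+1), by have := k.isLt; omega⟩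
        (Fin.mk_lt_mk.mpr (by omega)) (Fin.mk_lt_mk.mpr (by omega)) h1 h2

lemma glue_max : ((glue p q).symm (Fin.last (a + b)) : ℕ) = a := by
  have h : glue p q ⟨a, by omega⟩ = Fin.last (a + b) := by
    apply Fin.ext
    rw [glue_eq p q (by simp)]
    simp [Fin.last]
  rw [← h, Equiv.symm_apply_apply]

section Split

variable {a b : ℕ} (g : Equiv.Perm (Fin (a + b + 1)))

lemma g_lt_top (hga : (g ⟨a, by omega⟩ : ℕ) = a + b) {i : Fin (a + b + 1)}
    (hi : (i : ℕ) ≠ a) : (g i : ℕ) < a + b := by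
  have h1 := (g i).isLt
  have h2 : (g i : ℕ) ≠ a + b := by
    intro h
    have : g i = g ⟨a, by omega⟩ := Fin.ext (by rw [hga]; exact h)
    have := g.injective this
    apply hi
    rw [this]
  omega

lemma key_lt (hA : Av2 g) (hga : (g ⟨a, by omega⟩ : ℕ) = a + b)
    {i k : Fin (a + b + 1)} (hi : (i : ℕ) < a) (hk : a < (k : ℕ)) :
    (g k : ℕ) < g i := by
  by_contra hcon
  have hne : g i ≠ g k := fun h => by
    have := g.injective h
    rw [this] at hi
    omega
  have h1 : (g i : ℕ) < g k := by
    rcases Nat.lt_or_ge (g i : ℕ) (g k) with h | h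
    · exact h
    · exact absurd (Fin.ext (by omega : ((g i : ℕ)) = g k)) hne
  have h2 : (g k : ℕ) < g ⟨a, by omega⟩ := by
    rw [hga]
    exact g_lt_top g hga (by omega)
  exact hA i ⟨a, by omega⟩ k (Fin.lt_def.mpr hi) (Fin.lt_def.mpr hk) h1 h2

lemma bound1 (hA : Av2 g) (hga : (g ⟨a, by omega⟩ : ℕ) = a + b)
    {i : Fin (a + b + 1)} (hi : (i : ℕ) < a) :
    b ≤ (g i : ℕ) ∧ (g i : ℕ) < a + b := by
  refine ⟨?_, g_lt_top g hga (by omega)⟩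
  have himg : (Finset.Ioi (⟨a, by omega⟩ : Fin (a + b + 1))).image g ⊆ Finset.Iio (g i) := by
    intro v hv
    rw [Finset.mem_image] at hv
    obtain ⟨k, hk, rfl⟩ := hv
    rw [Finset.mem_Ioi] at hk
    rw [Finset.mem_Iio]
    exact Fin.lt_def.mpr (key_lt g hA hga hi (Fin.lt_def.mp hk))
  have hcard := Finset.card_le_card himg
  rw [Finset.card_image_of_injective _ g.injective, Fin.card_Ioi, Fin.card_Iio] at hcard
  simpa using hcard

lemma bound2 (hA : Av2 g) (hga : (g ⟨a, by omega⟩ : ℕ) = a + b)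
    {k : Fin (a + b + 1)} (hk : a < (k : ℕ)) : (g k : ℕ) < b := by
  have himg : (Finset.Iic (⟨a, by omega⟩ : Fin (a + b + 1))).image g ⊆ Finset.Ioi (g k) := by
    intro v hv
    rw [Finset.mem_image] at hv
    obtain ⟨i, hi, rfl⟩ := hv
    rw [Finset.mem_Iic] at hi
    rw [Finset.mem_Ioi]
    rcases Nat.lt_or_ge (i : ℕ) a with h | h
    · exact Fin.lt_def.mpr (key_lt g hA hga h hk)
    · have hle := Fin.le_def.mp hi
      simp only [Fin.val_mk] at hle
      have : (i : ℕ) = a := by omega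
      have hie : i = ⟨a, by omega⟩ := Fin.ext this
      rw [hie]
      exact Fin.lt_def.mpr (by rw [hga]; exact g_lt_top g hga (by omega))
  have hcard := Finset.card_le_card himg
  rw [Finset.card_image_of_injective _ g.injective, Fin.card_Iic, Fin.card_Ioi] at hcard
  have := k.isLt
  simp at hcard
  omega

noncomputable def split1 (hb : ∀ i : Fin (a + b + 1), (i : ℕ) < a → b ≤ (g i : ℕ) ∧ (g i : ℕ) < a + b) :
    Equiv.Perm (Fin a) :=
  Equiv.ofBijective
    (fun x => ⟨(g ⟨(x : ℕ), by have := x.isLt; omega⟩ : ℕ) - b, by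
      have := hb ⟨(x : ℕ), by have := x.isLt; omega⟩ x.isLt; omega⟩)
    (Finite.injective_iff_bijective.mp (by
      intro x y hxy
      have hx := hb ⟨(x : ℕ), by have := x.isLt; omega⟩ x.isLt
      have hy := hb ⟨(y : ℕ), by have := y.isLt; omega⟩ y.isLt
      have hval := congrArg Fin.val hxy
      simp only [Fin.val_mk] at hval
      have h2 : g ⟨(x : ℕ), by have := x.isLt; omega⟩ = g ⟨(y : ℕ), by have := y.isLt; omega⟩ :=
        Fin.ext (by omega)
      have h3 := congrArg Fin.val (g.injective h2)
      simp only [Fin.val_mk] at h3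
      exact Fin.ext h3))

noncomputable def split2 (hb : ∀ k : Fin (a + b + 1), a < (k : ℕ) → (g k : ℕ) < b) :
    Equiv.Perm (Fin b) :=
  Equiv.ofBijective
    (fun x => ⟨(g ⟨a + 1 + (x : ℕ), by have := x.isLt; omega⟩ : ℕ),
      hb _ (by show a < a + 1 + (x : ℕ); omega)⟩)
    (Finite.injective_iff_bijective.mp (by
      intro x y hxy
      have hval := congrArg Fin.val hxy
      simp only [Fin.val_mk] at hval
      have := congrArg Fin.val (g.injective (Fin.ext hval))
      simp only [Fin.val_mk] at this
      exact Fin.ext (by omega)))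

lemma split1_apply (hb : ∀ i : Fin (a + b + 1), (i : ℕ) < a → b ≤ (g i : ℕ) ∧ (g i : ℕ) < a + b)
    (x : Fin a) :
    (split1 g hb x : ℕ) = (g ⟨(x : ℕ), by have := x.isLt; omega⟩ : ℕ) - b := by
  simp only [split1, Equiv.ofBijective, Equiv.coe_fn_mk]

lemma split2_apply (hb : ∀ k : Fin (a + b + 1), a < (k : ℕ) → (g k : ℕ) < b) (x : Fin b) :
    (split2 g hb x : ℕ) = (g ⟨a + 1 + (x : ℕ), by have := x.isLt; omega⟩ : ℕ) := by
  simp only [split2, Equiv.ofBijective, Equiv.coe_fn_mk]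

lemma split1_av (hA : Av2 g) (hb : ∀ i : Fin (a + b + 1), (i : ℕ) < a → b ≤ (g i : ℕ) ∧ (g i : ℕ) < a + b) :
    Av2 (split1 g hb) := by
  intro x y z hxy hyz h1 h2
  have ex := split1_apply g hb x
  have ey := split1_apply g hb y
  have ez := split1_apply g hb z
  have bx := hb ⟨(x : ℕ), by have := x.isLt; omega⟩ x.isLt
  have by' := hb ⟨(y : ℕ), by have := y.isLt; omega⟩ y.isLt
  have bz := hb ⟨(z : ℕ), by have := z.isLt; omega⟩ z.isLt
  rw [ex, ez] at h1
  rw [ez, ey] at h2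
  refine hA ⟨(x : ℕ), by have := x.isLt; omega⟩ ⟨(y : ℕ), by have := y.isLt; omega⟩
    ⟨(z : ℕ), by have := z.isLt; omega⟩ (Fin.lt_def.mpr (Fin.lt_def.mp hxy))
    (Fin.lt_def.mpr (Fin.lt_def.mp hyz)) (by omega) (by omega)

lemma split2_av (hA : Av2 g) (hb : ∀ k : Fin (a + b + 1), a < (k : ℕ) → (g k : ℕ) < b) :
    Av2 (split2 g hb) := by
  intro x y z hxy hyz h1 h2
  have ex := split2_apply g hb x
  have ey := split2_apply g hb y
  have ez := split2_apply g hb z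
  rw [ex, ez] at h1
  rw [ez, ey] at h2
  refine hA ⟨a + 1 + (x : ℕ), by have := x.isLt; omega⟩ ⟨a + 1 + (y : ℕ), by have := y.isLt; omega⟩
    ⟨a + 1 + (z : ℕ), by have := z.isLt; omega⟩
    (Fin.lt_def.mpr (by simp only [Fin.val_mk]; have := Fin.lt_def.mp hxy; omega))
    (Fin.lt_def.mpr (by simp only [Fin.val_mk]; have := Fin.lt_def.mp hyz; omega)) (by omega) (by omega)

lemma glue_split (hga : (g ⟨a, by omega⟩ : ℕ) = a + b)
    (hb1 : ∀ i : Fin (a + b + 1), (i : ℕ) < a → b ≤ (g i : ℕ) ∧ (g i : ℕ) < a + b)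
    (hb2 : ∀ k : Fin (a + b + 1), a < (k : ℕ) → (g k : ℕ) < b) :
    glue (split1 g hb1) (split2 g hb2) = g := by
  apply Equiv.ext
  intro i
  apply Fin.ext
  rcases lt_trichotomy ((i : ℕ)) a with h | h | h
  · rw [glue_lt _ _ h]
    rw [split1_apply g hb1 ⟨(i : ℕ), h⟩]
    have hbd := hb1 ⟨(i : ℕ), by have := i.isLt; omega⟩ h
    have hi : (⟨(i : ℕ), by have := i.isLt; omega⟩ : Fin (a + b + 1)) = i := Fin.eta i _
    rw [hi] at hbd ⊢
    omega
  · rw [glue_eq _ _ h]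
    have : i = ⟨a, by omega⟩ := Fin.ext h
    rw [this, hga]
  · rw [glue_gt _ _ h]
    rw [split2_apply g hb2 ⟨(i : ℕ) - (a + 1), by have := i.isLt; omega⟩]
    have hi : (⟨a + 1 + ((i : ℕ) - (a + 1)), by have := i.isLt; omega⟩ : Fin (a + b + 1)) = i :=
      Fin.ext (by simp; omega)
    rw [hi]

end Split

lemma glue_inj {a b : ℕ} {p p' : Equiv.Perm (Fin a)} {q q' : Equiv.Perm (Fin b)}
    (h : glue p q = glue p' q') : p = p' ∧ q = q' := by
  constructor
  · apply Equiv.ext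
    intro z
    apply Fin.ext
    have hz : ((⟨(z : ℕ), by have := z.isLt; omega⟩ : Fin (a + b + 1)) : ℕ) < a := z.isLt
    have e1 := glue_lt p q hz
    have e2 := glue_lt p' q' hz
    rw [h] at e1
    simp only [Fin.val_mk, Fin.eta] at e1 e2
    omega
  · apply Equiv.ext
    intro z
    apply Fin.ext
    have hz : a < ((⟨a + 1 + (z : ℕ), by have := z.isLt; omega⟩ : Fin (a + b + 1)) : ℕ) := by
      simp only [Fin.val_mk]; omega
    have e1 := glue_gt p q hz
    have e2 := glue_gt p' q' hz
    rw [h] at e1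
    simp only [Fin.val_mk, Nat.add_sub_cancel_left, Fin.eta] at e1 e2
    omega

lemma symm_last_eq {a b : ℕ} (g : Equiv.Perm (Fin (a + b + 1)))
    (hm : ((g.symm (Fin.last (a + b))) : ℕ) = a) : (g ⟨a, by omega⟩ : ℕ) = a + b := by
  have h1 : g.symm (Fin.last (a + b)) = ⟨a, by omega⟩ := Fin.ext hm
  rw [← h1, Equiv.apply_symm_apply]
  rfl

lemma card_fiber (a b : ℕ) :
    Nat.card {g : Equiv.Perm (Fin (a + b + 1)) //
        Av2 g ∧ ((g.symm (Fin.last (a + b))) : ℕ) = a}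
      = Nat.card {p : Equiv.Perm (Fin a) // Av2 p}
        * Nat.card {q : Equiv.Perm (Fin b) // Av2 q} := by
  rw [← Nat.card_prod]
  apply le_antisymm
  · apply Nat.card_le_card_of_injective
      (f := fun x : {g : Equiv.Perm (Fin (a + b + 1)) //
          Av2 g ∧ ((g.symm (Fin.last (a + b))) : ℕ) = a} =>
        ((⟨split1 x.1 (fun i hi => bound1 x.1 x.2.1 (symm_last_eq x.1 x.2.2) hi),
            split1_av x.1 x.2.1 (fun i hi => bound1 x.1 x.2.1 (symm_last_eq x.1 x.2.2) hi)⟩,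
          ⟨split2 x.1 (fun k hk => bound2 x.1 x.2.1 (symm_last_eq x.1 x.2.2) hk),
            split2_av x.1 x.2.1 (fun k hk => bound2 x.1 x.2.1 (symm_last_eq x.1 x.2.2) hk)⟩) :
          {p : Equiv.Perm (Fin a) // Av2 p} × {q : Equiv.Perm (Fin b) // Av2 q}))
    intro x y hxy
    have h1 : split1 x.1 (fun i hi => bound1 x.1 x.2.1 (symm_last_eq x.1 x.2.2) hi)
        = split1 y.1 (fun i hi => bound1 y.1 y.2.1 (symm_last_eq y.1 y.2.2) hi) :=
      Subtype.ext_iff.mp (congrArg Prod.fst hxy)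
    have h2 : split2 x.1 (fun k hk => bound2 x.1 x.2.1 (symm_last_eq x.1 x.2.2) hk)
        = split2 y.1 (fun k hk => bound2 y.1 y.2.1 (symm_last_eq y.1 y.2.2) hk) :=
      Subtype.ext_iff.mp (congrArg Prod.snd hxy)
    apply Subtype.ext
    rw [← glue_split x.1 (symm_last_eq x.1 x.2.2)
        (fun i hi => bound1 x.1 x.2.1 (symm_last_eq x.1 x.2.2) hi)
        (fun k hk => bound2 x.1 x.2.1 (symm_last_eq x.1 x.2.2) hk),
      ← glue_split y.1 (symm_last_eq y.1 y.2.2)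
        (fun i hi => bound1 y.1 y.2.1 (symm_last_eq y.1 y.2.2) hi)
        (fun k hk => bound2 y.1 y.2.1 (symm_last_eq y.1 y.2.2) hk), h1, h2]
  · apply Nat.card_le_card_of_injective
      (f := fun pq : {p : Equiv.Perm (Fin a) // Av2 p} × {q : Equiv.Perm (Fin b) // Av2 q} =>
        (⟨glue pq.1.1 pq.2.1, glue_av pq.1.1 pq.2.1 pq.1.2 pq.2.2, glue_max pq.1.1 pq.2.1⟩ :
          {g : Equiv.Perm (Fin (a + b + 1)) //
            Av2 g ∧ ((g.symm (Fin.last (a + b))) : ℕ) = a}))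
    intro x y hxy
    have h := Subtype.ext_iff.mp hxy
    obtain ⟨h1, h2⟩ := glue_inj h
    exact Prod.ext (Subtype.ext h1) (Subtype.ext h2)

theorem card_av2 (n : ℕ) : Nat.card {p : Equiv.Perm (Fin n) // Av2 p} = catalan n := by
  induction n using Nat.strong_induction_on with
  | _ n ih =>
    cases n with
    | zero =>
      have hall : ∀ p : Equiv.Perm (Fin 0), Av2 p := fun p i => i.elim0
      rw [Nat.card_congr (Equiv.subtypeUnivEquiv hall)]
      simp [Nat.card_eq_fintype_card]
    | succ m =>
      classical
      rw [Nat.card_eq_fintype_card, Fintype.card_subtype]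
      rw [Finset.card_eq_sum_card_fiberwise
        (f := fun p : Equiv.Perm (Fin (m + 1)) => ((p.symm (Fin.last m)) : ℕ))
        (t := Finset.range (m + 1))
        (fun p _ => Finset.mem_range.mpr (p.symm (Fin.last m)).isLt)]
      rw [catalan_succ, Fin.sum_univ_eq_sum_range (fun j => catalan j * catalan (m - j)) (m + 1)]
      apply Finset.sum_congr rfl
      intro x hx
      rw [Finset.mem_range] at hx
      rw [Finset.filter_filter]
      have hc : ((Finset.univ.filter fun p : Equiv.Perm (Fin (m + 1)) =>
            Av2 p ∧ ((p.symm (Fin.last m)) : ℕ) = x).card)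
          = Nat.card {p : Equiv.Perm (Fin (m + 1)) //
              Av2 p ∧ ((p.symm (Fin.last m)) : ℕ) = x} := by
        rw [Nat.card_eq_fintype_card, Fintype.card_subtype]
      rw [hc]
      obtain ⟨c, rfl⟩ : ∃ c, m = x + c := ⟨m - x, by omega⟩
      rw [card_fiber x c, ih x (by omega), ih c (by omega), Nat.add_sub_cancel_left]

theorem stmt_9 (n : ℕ) :
    Nat.card {p : Equiv.Perm (Fin n) // Avoids132 p} = catalan n := by
  exact (Nat.card_congr (Equiv.subtypeEquivRight (fun p => avoids_iff p))).trans (card_av2 n)
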